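/- Let $g = h_0 + \sum_{n=1}^N h_n e^{i\theta_n^\star}$ where $(\theta_1^\star, \ldots, \theta_N^\star) \in \Phi_K^N$ maximizes $|h_0 + \sum_n h_n e^{i\theta_n}|$, and suppose $g \neq 0$. Then for each $n$, $\theta_n^\star$ minimizes the angular distance between $e^{i(\theta_n + \alpha_n)}$ and $g/|g|$ over $\theta_n \in \Phi_K$; that is, $\theta_n^\star \in \arg\min_{\theta \in \Phi_K} d(\theta + \alpha_n, \angle g)$, where $d(x,y)$ denotes the distance on the circle $\mathbb{R}/2\pi\mathbb{Z}$. -/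

import Mathlib

open Real Complex

/-- Circular distance on ℝ / 2πℤ. -/
noncomputable def cdist (x y : ℝ) : ℝ := sInf (Set.range fun m : ℤ => |x - y + 2 * π * m|)

/-- The discrete phase-shift set Φ_K = {ω, 2ω, …, Kω}, ω = 2π/K. -/
def Phi (K : ℕ) : Set ℝ := {θ | ∃ k : ℕ, 1 ≤ k ∧ k ≤ K ∧ θ = k * (2 * π / K)}

lemma cdist_eq (x y : ℝ) :
    cdist x y = |(x - y) - round ((x - y) / (2 * π)) * (2 * π)| := by
  have hπ : (0:ℝ) < 2 * π := by positivity
  set d := x - y with hd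
  set r : ℤ := round (d / (2 * π)) with hr
  apply le_antisymm
  · apply csInf_le ⟨0, by rintro _ ⟨m, rfl⟩; positivity⟩
    refine ⟨-r, ?_⟩
    show |x - y + 2 * π * (-r : ℤ)| = _
    push_cast
    rw [hd]; congr 1; ring
  · apply le_csInf ⟨_, Set.mem_range_self (0:ℤ)⟩
    rintro _ ⟨m, rfl⟩
    show _ ≤ |x - y + 2 * π * m|
    have h1 : d + 2 * π * m = (2 * π) * (d / (2 * π) - (-m : ℤ)) := by
      push_cast; field_simp; try ring
    have h2 : d - r * (2 * π) = (2 * π) * (d / (2 * π) - r) := by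
      field_simp
    rw [h1, h2, abs_mul (2 * π), abs_mul (2 * π), abs_of_pos hπ]
    exact mul_le_mul_of_nonneg_left (round_le (d / (2 * π)) (-m)) hπ.le

lemma cdist_mem_Icc (x y : ℝ) : cdist x y ∈ Set.Icc 0 π := by
  rw [cdist_eq]
  refine ⟨abs_nonneg _, ?_⟩
  have h2 : x - y - round ((x - y) / (2 * π)) * (2 * π)
      = (2 * π) * ((x - y) / (2 * π) - round ((x - y) / (2 * π))) := by
    field_simp
  rw [h2, abs_mul, abs_of_pos (by positivity : (0:ℝ) < 2 * π)]
  have := abs_sub_round ((x - y) / (2 * π))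
  nlinarith [Real.pi_pos]

lemma cos_cdist (x y : ℝ) : Real.cos (cdist x y) = Real.cos (x - y) := by
  rw [cdist_eq, Real.cos_abs, Real.cos_sub_int_mul_two_pi]

theorem stmt_1 (K N : ℕ) (hK : 1 ≤ K) (β α : Fin (N + 1) → ℝ) (hβ : ∀ n, 0 < β n)
    (h : Fin (N + 1) → ℂ)
    (hh : ∀ n, h n = (β n : ℂ) * Complex.exp ((α n : ℂ) * Complex.I))
    (θs : Fin N → ℝ) (hθs : ∀ n, θs n ∈ Phi K)
    (hmax : ∀ θ : Fin N → ℝ, (∀ n, θ n ∈ Phi K) →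
      ‖h 0 + ∑ n : Fin N, h n.succ * Complex.exp (θ n * Complex.I)‖
        ≤ ‖h 0 + ∑ n : Fin N, h n.succ * Complex.exp (θs n * Complex.I)‖)
    (g : ℂ) (hg : g = h 0 + ∑ n : Fin N, h n.succ * Complex.exp (θs n * Complex.I))
    (hg0 : g ≠ 0) :
    ∀ n : Fin N, ∀ θ ∈ Phi K, cdist (θs n + α n.succ) g.arg ≤ cdist (θ + α n.succ) g.arg := by
  classical
  intro n θ hθ
  set s : ℝ := θs n with hs
  set A : ℝ := α n.succ with hA
  set a : ℝ := g.arg with ha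
  set B : ℝ := β n.succ with hB
  set G : ℝ := ‖g‖ with hG
  set δ : ℂ := h n.succ * (Complex.exp ((θ:ℂ) * Complex.I) - Complex.exp ((s:ℂ) * Complex.I))
    with hδdef
  -- the perturbed configuration
  set θ' : Fin N → ℝ := Function.update θs n θ with hθ'def
  have hθ' : ∀ k, θ' k ∈ Phi K := by
    intro k
    by_cases hk : k = n
    · subst hk; simpa [hθ'def] using hθ
    · simpa [hθ'def, Function.update_of_ne hk] using hθs k
  have hfun : (fun k : Fin N => h k.succ * Complex.exp ((θ' k : ℂ) * Complex.I))
      = Function.update (fun k : Fin N => h k.succ * Complex.exp ((θs k : ℂ) * Complex.I)) n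
        (h n.succ * Complex.exp ((θ:ℂ) * Complex.I)) := by
    funext k
    by_cases hk : k = n
    · subst hk; simp [hθ'def]
    · simp [hθ'def, hk, Function.update_of_ne hk]
  have hsum : (∑ k : Fin N, h k.succ * Complex.exp ((θ' k : ℂ) * Complex.I))
      = (∑ k : Fin N, h k.succ * Complex.exp ((θs k : ℂ) * Complex.I)) + δ := by
    rw [hfun, Finset.sum_update_of_mem (Finset.mem_univ n),
      Finset.sdiff_singleton_eq_erase,
      ← Finset.add_sum_erase Finset.univ
        (fun k : Fin N => h k.succ * Complex.exp ((θs k : ℂ) * Complex.I)) (Finset.mem_univ n),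
      hδdef]
    ring
  have hle : ‖g + δ‖ ≤ ‖g‖ := by
    have h2 := hmax θ' hθ'
    rw [hsum, ← add_assoc, ← hg] at h2
    exact h2
  have hre : (g * (starRingEnd ℂ) δ).re ≤ 0 := by
    have h3 : ‖g + δ‖ ^ 2 ≤ ‖g‖ ^ 2 :=
      pow_le_pow_left₀ (norm_nonneg _) hle 2
    rw [Complex.sq_norm, Complex.sq_norm, Complex.normSq_add] at h3
    nlinarith [Complex.normSq_nonneg δ]
  have hconj : ∀ x : ℝ, (starRingEnd ℂ) (Complex.exp ((x:ℂ) * Complex.I))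
      = Complex.exp ((((-x : ℝ)):ℂ) * Complex.I) := by
    intro x
    rw [← Complex.exp_conj]
    congr 1
    push_cast
    simp [Complex.conj_I]
    try ring
  have hconjδ : (starRingEnd ℂ) δ = ((B:ℝ):ℂ) * Complex.exp (((-A : ℝ):ℂ) * Complex.I)
      * (Complex.exp (((-θ : ℝ):ℂ) * Complex.I) - Complex.exp (((-s : ℝ):ℂ) * Complex.I)) := by
    rw [hδdef, hh, map_mul, map_mul, map_sub, Complex.conj_ofReal, hconj, hconj, hconj]
  have hmain : g * (starRingEnd ℂ) δ
      = ((G * B : ℝ):ℂ) * (Complex.exp (((a - A - θ : ℝ):ℂ) * Complex.I)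
        - Complex.exp (((a - A - s : ℝ):ℂ) * Complex.I)) := by
    rw [hconjδ]
    conv_lhs => rw [← Complex.norm_mul_exp_arg_mul_I g]
    rw [show (((a - A - θ : ℝ)):ℂ) * Complex.I
        = (a:ℂ) * Complex.I + ((-A : ℝ):ℂ) * Complex.I + ((-θ : ℝ):ℂ) * Complex.I by
      push_cast; ring]
    rw [show (((a - A - s : ℝ)):ℂ) * Complex.I
        = (a:ℂ) * Complex.I + ((-A : ℝ):ℂ) * Complex.I + ((-s : ℝ):ℂ) * Complex.I by
      push_cast; ring]
    rw [Complex.exp_add, Complex.exp_add, Complex.exp_add, Complex.exp_add]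
    push_cast
    ring
  have hre2 : G * B * (Real.cos (a - A - θ) - Real.cos (a - A - s)) ≤ 0 := by
    rw [hmain] at hre
    rw [Complex.re_ofReal_mul, Complex.sub_re, Complex.exp_ofReal_mul_I_re,
      Complex.exp_ofReal_mul_I_re] at hre
    exact hre
  have hGpos : 0 < G := by
    rw [hG]; exact norm_pos_iff.mpr hg0
  have hBpos : 0 < B := hβ n.succ
  have hcos : Real.cos (a - A - θ) ≤ Real.cos (a - A - s) := by nlinarith [mul_pos hGpos hBpos]
  have hc1 : Real.cos (cdist (s + A) a) = Real.cos (a - A - s) := by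
    rw [cos_cdist, ← Real.cos_neg]; congr 1; ring
  have hc2 : Real.cos (cdist (θ + A) a) = Real.cos (a - A - θ) := by
    rw [cos_cdist, ← Real.cos_neg]; congr 1; ring
  by_contra hlt
  push_neg at hlt
  have := Real.strictAntiOn_cos (cdist_mem_Icc (θ + A) a) (cdist_mem_Icc (s + A) a) hlt
  rw [hc1, hc2] at this
  linarith
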